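/- Let π be a unitary representation of a group G on a Hilbert space H, let (e_μ)_{μ ∈ P} (P ⊆ ℤ) be an orthonormal basis of H, let a : ℝ → G and k : ℝ → G be maps with π(k_θ) e_μ = e^{iμθ} e_μ for all θ ∈ ℝ and μ ∈ P. If |⟨π(a_r) e_μ, e_ν⟩| ≤ C·e^{-λr} for some constants C, λ and all r > 0, μ, ν ∈ P, then for all f, g ∈ H and r > 0: (∫_{-π}^{π} ∫_{-π}^{π} |⟨π(k_{θ₁} a_r k_{θ₂}) f, g⟩|² dθ₁ dθ₂)^{1/2} ≤ C·e^{-λr}·‖f‖·‖g‖. -/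

import Mathlib

open Real MeasureTheory
open scoped InnerProductSpace ComplexConjugate ENNReal NNReal

noncomputable section

lemma fourier_arg_simp (n : ℤ) (θ : ℝ) :
    fourier n (θ : AddCircle (2 * π)) = Complex.exp (Complex.I * n * θ) := by
  rw [fourier_coe_apply]
  congr 1
  have h2 : ((2 * π : ℝ) : ℂ) ≠ 0 := by
    simp [Real.pi_ne_zero]
  have hπ : (π : ℂ) ≠ 0 := by
    simpa using Real.pi_ne_zero
  push_cast
  field_simp

lemma parseval_exp (d : ℤ → ℂ) (hd : Summable d) :
    (∫ θ in (-π)..π, ‖∑' n : ℤ, d n * Complex.exp (Complex.I * n * θ)‖ ^ 2)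
      = (2 * π) * ∑' n : ℤ, ‖d n‖ ^ 2 := by
  haveI : Fact (0 < 2 * π) := ⟨by positivity⟩
  have hnorm : ∀ n : ℤ, ‖d n • (fourier n : C(AddCircle (2 * π), ℂ))‖ = ‖d n‖ := by
    intro n
    rw [norm_smul]
    have h1 : ‖(fourier n : C(AddCircle (2 * π), ℂ))‖ = 1 := by
      rw [ContinuousMap.norm_eq_iSup_norm]
      have h0 : ∀ x : AddCircle (2 * π), ‖(fourier n : C(AddCircle (2 * π), ℂ)) x‖ = 1 := by
        intro x
        induction x using QuotientAddGroup.induction_on with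
        | H θ =>
          rw [fourier_arg_simp, Complex.norm_exp]
          have : (Complex.I * n * θ).re = 0 := by
            simp [Complex.mul_re, Complex.mul_im]
          rw [this, Real.exp_zero]
      simp only [h0, ciSup_const]
    rw [h1, mul_one]
  have hsum : Summable fun n : ℤ => d n • (fourier n : C(AddCircle (2 * π), ℂ)) := by
    apply Summable.of_norm
    simpa only [hnorm] using hd.norm
  obtain ⟨F, hF⟩ := hsum
  have hFx : ∀ x : AddCircle (2 * π), HasSum (fun n : ℤ => d n * fourier n x) (F x) := by
    intro x
    have := (ContinuousMap.evalCLM ℂ x).hasSum hF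
    simpa using this
  have hFθ : ∀ θ : ℝ, F (θ : AddCircle (2 * π)) = ∑' n : ℤ, d n * Complex.exp (Complex.I * n * θ) := by
    intro θ
    have := (hFx (θ : AddCircle (2 * π))).tsum_eq.symm
    simp only [fourier_arg_simp] at this
    exact this
  have hLp : HasSum (fun n : ℤ => d n • fourierLp 2 n)
      (ContinuousMap.toLp (E := ℂ) 2 AddCircle.haarAddCircle ℂ F) := by
    have := (ContinuousMap.toLp (E := ℂ) 2 AddCircle.haarAddCircle ℂ).hasSum hF
    simpa [fourierLp] using this
  have hcoeff : ∀ n : ℤ, fourierCoeff (↑↑(ContinuousMap.toLp (E := ℂ) 2 AddCircle.haarAddCircle ℂ F) :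
      AddCircle (2 * π) → ℂ) n = d n := by
    intro n
    rw [← fourierBasis_repr]
    rw [HilbertBasis.repr_apply_apply]
    have horth := (fourierBasis (T := 2 * π)).orthonormal
    rw [orthonormal_iff_ite] at horth
    have hb : ∀ m : ℤ, (fourierBasis (T := 2 * π)) m = fourierLp 2 m := fun m =>
      congrFun coe_fourierBasis m
    have h1 : HasSum (fun m : ℤ => ⟪(fourierBasis (T := 2 * π)) n, d m • fourierLp 2 m⟫_ℂ)
        ⟪(fourierBasis (T := 2 * π)) n, ContinuousMap.toLp (E := ℂ) 2 AddCircle.haarAddCircle ℂ F⟫_ℂ :=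
      (innerSL ℂ ((fourierBasis (T := 2 * π)) n)).hasSum hLp
    have h2 : (fun m : ℤ => ⟪(fourierBasis (T := 2 * π)) n, d m • fourierLp 2 m⟫_ℂ)
        = fun m : ℤ => if m = n then d n else 0 := by
      funext m
      rw [inner_smul_right, ← hb m, horth n m]
      by_cases h : m = n
      · simp [h]
      · rw [if_neg h, if_neg (fun hnm => h hnm.symm), mul_zero]
    rw [h2] at h1
    exact h1.unique (hasSum_ite_eq n (d n))
  -- Parseval
  have hpars := tsum_sq_fourierCoeff (ContinuousMap.toLp (E := ℂ) 2 AddCircle.haarAddCircle ℂ F)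
  simp only [hcoeff] at hpars
  -- replace the a.e. representative by F
  have hae : (↑↑(ContinuousMap.toLp (E := ℂ) 2 AddCircle.haarAddCircle ℂ F) :
      AddCircle (2 * π) → ℂ) =ᵐ[AddCircle.haarAddCircle] F :=
    ContinuousMap.coeFn_toLp AddCircle.haarAddCircle F
  have hint : (∫ t : AddCircle (2 * π), ‖(↑↑(ContinuousMap.toLp (E := ℂ) 2 AddCircle.haarAddCircle ℂ F) :
      AddCircle (2 * π) → ℂ) t‖ ^ 2 ∂AddCircle.haarAddCircle)
      = ∫ t : AddCircle (2 * π), ‖F t‖ ^ 2 ∂AddCircle.haarAddCircle := by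
    apply integral_congr_ae
    filter_upwards [hae] with t ht
    rw [ht]
  rw [hint] at hpars
  -- convert to the interval integral
  have hvol : (∫ t : AddCircle (2 * π), ‖F t‖ ^ 2)
      = (2 * π) * ∫ t : AddCircle (2 * π), ‖F t‖ ^ 2 ∂AddCircle.haarAddCircle := by
    rw [AddCircle.volume_eq_smul_haarAddCircle, integral_smul_measure, ENNReal.toReal_ofReal
      (by positivity), smul_eq_mul]
  have hpre := AddCircle.intervalIntegral_preimage (2 * π) (-π)
    (fun t : AddCircle (2 * π) => ‖F t‖ ^ 2)
  have hπ : -π + 2 * π = π := by ring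
  rw [hπ] at hpre
  calc (∫ θ in (-π)..π, ‖∑' n : ℤ, d n * Complex.exp (Complex.I * n * θ)‖ ^ 2)
      = ∫ θ in (-π)..π, ‖F (θ : AddCircle (2 * π))‖ ^ 2 := by
        apply intervalIntegral.integral_congr
        intro θ _
        simp only []
        rw [hFθ θ]
    _ = ∫ t : AddCircle (2 * π), ‖F t‖ ^ 2 := hpre
    _ = (2 * π) * ∫ t : AddCircle (2 * π), ‖F t‖ ^ 2 ∂AddCircle.haarAddCircle := hvol
    _ = (2 * π) * ∑' n : ℤ, ‖d n‖ ^ 2 := by rw [← hpars]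

lemma norm_exp_I_mul (n : ℤ) (θ : ℝ) : ‖Complex.exp (Complex.I * n * θ)‖ = 1 := by
  rw [Complex.norm_exp]
  have : (Complex.I * n * θ).re = 0 := by
    simp [Complex.mul_re, Complex.mul_im]
  rw [this, Real.exp_zero]

lemma continuous_tsum_exp (d : ℤ → ℂ) (hd : Summable d) :
    Continuous fun θ : ℝ => ∑' n : ℤ, d n * Complex.exp (Complex.I * n * θ) := by
  apply continuous_tsum (u := fun n => ‖d n‖) (fun n => by fun_prop) hd.norm
  intro n θ
  rw [norm_mul, norm_exp_I_mul, mul_one]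

section rep

variable {H : Type*} [NormedAddCommGroup H] [InnerProductSpace ℂ H] [CompleteSpace H]
  {P : Set ℤ}

lemma summable_sq {ι : Type*} (v : lp (fun _ : ι => ℂ) 2) :
    Summable fun i => ‖v i‖ ^ 2 := by
  have h := lp.memℓp v
  rw [memℓp_gen_iff (p := 2) (by norm_num)] at h
  have h2 : (2 : ℝ≥0∞).toReal = ((2 : ℕ) : ℝ) := by norm_num
  rw [h2] at h
  simpa [Real.rpow_natCast] using h

open Classical

def coefZ (e : HilbertBasis P ℂ H) (x y : H) : ℤ → ℂ :=
  fun n => if h : n ∈ P then e.repr x ⟨n, h⟩ * conj (e.repr y ⟨n, h⟩) else 0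

lemma coefZ_coe (e : HilbertBasis P ℂ H) (x y : H) (μ : P) :
    coefZ e x y (μ : ℤ) = e.repr x μ * conj (e.repr y μ) := by
  simp [coefZ]

lemma coefZ_of_not_mem (e : HilbertBasis P ℂ H) (x y : H) {n : ℤ}
    (hn : n ∉ Set.range (Subtype.val : P → ℤ)) : coefZ e x y n = 0 := by
  rw [Subtype.range_coe] at hn
  simp [coefZ, hn]

lemma summable_coefZ (e : HilbertBasis P ℂ H) (x y : H) : Summable (coefZ e x y) := by
  rw [← Function.Injective.summable_iff Subtype.val_injective
    (fun n hn => coefZ_of_not_mem e x y hn)]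
  apply Summable.of_norm
  apply Summable.of_nonneg_of_le (fun μ => norm_nonneg _) (fun μ : P => ?_)
    (((summable_sq (e.repr x)).add (summable_sq (e.repr y))).div_const 2)
  rw [Function.comp_apply, coefZ_coe, norm_mul, RCLike.norm_conj]
  have := two_mul_le_add_sq ‖e.repr x μ‖ ‖e.repr y μ‖
  nlinarith [norm_nonneg (e.repr x μ), norm_nonneg (e.repr y μ)]

lemma tsum_sq_coefZ (e : HilbertBasis P ℂ H) (x y : H) :
    ∑' n : ℤ, ‖coefZ e x y n‖ ^ 2 = ∑' μ : P, ‖e.repr x μ‖ ^ 2 * ‖e.repr y μ‖ ^ 2 := by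
  have hsupp : Function.support (fun n : ℤ => ‖coefZ e x y n‖ ^ 2)
      ⊆ Set.range (Subtype.val : P → ℤ) := by
    intro n hn
    by_contra h
    exact hn (by simp only []; rw [coefZ_of_not_mem e x y h]; simp)
  rw [← Function.Injective.tsum_eq Subtype.val_injective hsupp]
  apply tsum_congr
  intro μ
  rw [coefZ_coe, norm_mul, RCLike.norm_conj, mul_pow]

variable {G : Type*} [Group G]

lemma inner_eq_tsum (e : HilbertBasis P ℂ H) (ρ : G →* (H ≃ₗᵢ[ℂ] H)) (k : ℝ → G)
    (hk : ∀ (θ : ℝ) (μ : P), ρ (k θ) (e μ) = Complex.exp (Complex.I * ((μ : ℤ) : ℂ) * (θ : ℂ)) • e μ)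
    (x y : H) (θ : ℝ) :
    ⟪y, ρ (k θ) x⟫_ℂ = ∑' n : ℤ, coefZ e x y n * Complex.exp (Complex.I * n * θ) := by
  have h1 : HasSum (fun μ : P => e.repr x μ • e μ) x := e.hasSum_repr x
  have h2 : HasSum (fun μ : P => e.repr x μ • (ρ (k θ) (e μ))) (ρ (k θ) x) := by
    have := ((ρ (k θ)).toContinuousLinearEquiv.toContinuousLinearMap).hasSum h1
    simpa using this
  have h3 : HasSum (fun μ : P => ⟪y, e.repr x μ • (ρ (k θ) (e μ))⟫_ℂ) ⟪y, ρ (k θ) x⟫_ℂ :=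
    (innerSL ℂ y).hasSum h2
  have h4 : (fun μ : P => ⟪y, e.repr x μ • (ρ (k θ) (e μ))⟫_ℂ)
      = fun μ : P => coefZ e x y (μ : ℤ) * Complex.exp (Complex.I * ((μ : ℤ) : ℂ) * θ) := by
    funext μ
    rw [hk θ μ, inner_smul_right, inner_smul_right, coefZ_coe]
    have : ⟪y, e μ⟫_ℂ = conj (e.repr y μ) := by
      rw [HilbertBasis.repr_apply_apply, ← inner_conj_symm]
    rw [this]
    ring
  rw [h4] at h3
  have h5 : HasSum (fun n : ℤ => coefZ e x y n * Complex.exp (Complex.I * n * θ))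
      ⟪y, ρ (k θ) x⟫_ℂ := by
    rw [← Function.Injective.hasSum_iff Subtype.val_injective (fun n hn => ?_)]
    · exact h3
    · rw [coefZ_of_not_mem e x y hn, zero_mul]
  exact h5.tsum_eq.symm

lemma norm_inner_eq (e : HilbertBasis P ℂ H) (ρ : G →* (H ≃ₗᵢ[ℂ] H)) (k : ℝ → G)
    (hk : ∀ (θ : ℝ) (μ : P), ρ (k θ) (e μ) = Complex.exp (Complex.I * ((μ : ℤ) : ℂ) * (θ : ℂ)) • e μ)
    (x y : H) (θ : ℝ) :
    ‖⟪ρ (k θ) x, y⟫_ℂ‖ = ‖∑' n : ℤ, coefZ e x y n * Complex.exp (Complex.I * n * θ)‖ := by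
  rw [norm_inner_symm, inner_eq_tsum e ρ k hk x y θ]

lemma key_integral (e : HilbertBasis P ℂ H) (ρ : G →* (H ≃ₗᵢ[ℂ] H)) (k : ℝ → G)
    (hk : ∀ (θ : ℝ) (μ : P), ρ (k θ) (e μ) = Complex.exp (Complex.I * ((μ : ℤ) : ℂ) * (θ : ℂ)) • e μ)
    (x y : H) :
    (∫ θ in (-π)..π, ‖⟪ρ (k θ) x, y⟫_ℂ‖ ^ 2)
      = (2 * π) * ∑' μ : P, ‖e.repr x μ‖ ^ 2 * ‖e.repr y μ‖ ^ 2 := by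
  have h1 : (∫ θ in (-π)..π, ‖⟪ρ (k θ) x, y⟫_ℂ‖ ^ 2)
      = ∫ θ in (-π)..π, ‖∑' n : ℤ, coefZ e x y n * Complex.exp (Complex.I * n * θ)‖ ^ 2 := by
    apply intervalIntegral.integral_congr
    intro θ _
    simp only []
    rw [norm_inner_eq e ρ k hk x y θ]
  rw [h1, parseval_exp _ (summable_coefZ e x y), tsum_sq_coefZ e x y]

lemma continuous_norm_inner (e : HilbertBasis P ℂ H) (ρ : G →* (H ≃ₗᵢ[ℂ] H)) (k : ℝ → G)
    (hk : ∀ (θ : ℝ) (μ : P), ρ (k θ) (e μ) = Complex.exp (Complex.I * ((μ : ℤ) : ℂ) * (θ : ℂ)) • e μ)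
    (x y : H) :
    Continuous fun θ : ℝ => ‖⟪ρ (k θ) x, y⟫_ℂ‖ ^ 2 := by
  have : (fun θ : ℝ => ‖⟪ρ (k θ) x, y⟫_ℂ‖ ^ 2)
      = fun θ : ℝ => ‖∑' n : ℤ, coefZ e x y n * Complex.exp (Complex.I * n * θ)‖ ^ 2 := by
    funext θ
    rw [norm_inner_eq e ρ k hk x y θ]
  rw [this]
  exact ((continuous_tsum_exp _ (summable_coefZ e x y)).norm).pow 2

lemma tsum_sq_repr (e : HilbertBasis P ℂ H) (f : H) :
    ∑' μ : P, ‖e.repr f μ‖ ^ 2 = ‖f‖ ^ 2 := by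
  have h := e.tsum_inner_mul_inner f f
  have h2 : ∀ μ : P, ⟪f, e μ⟫_ℂ * ⟪e μ, f⟫_ℂ = ((‖e.repr f μ‖ ^ 2 : ℝ) : ℂ) := by
    intro μ
    rw [← inner_conj_symm, ← HilbertBasis.repr_apply_apply, Complex.conj_mul']
    push_cast
    ring
  simp only [h2] at h
  rw [inner_self_eq_norm_sq_to_K] at h
  rw [← Complex.ofReal_tsum] at h
  have h3 := congrArg Complex.re h
  simpa [← Complex.ofReal_pow] using h3

end rep


theorem pointwise_to_integral_estimate
    {G : Type*} [Group G] {H : Type*} [NormedAddCommGroup H] [InnerProductSpace ℂ H]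
    [CompleteSpace H] {P : Set ℤ}
    (ρ : G →* (H ≃ₗᵢ[ℂ] H)) (e : HilbertBasis P ℂ H) (a k : ℝ → G) (C lam : ℝ)
    (hk : ∀ (θ : ℝ) (μ : P), ρ (k θ) (e μ) = Complex.exp (Complex.I * ((μ : ℤ) : ℂ) * (θ : ℂ)) • e μ)
    (hbound : ∀ r : ℝ, 0 < r → ∀ μ ν : P, ‖⟪ρ (a r) (e μ), e ν⟫_ℂ‖ ≤ C * Real.exp (-lam * r)) :
    ∀ (f g : H) (r : ℝ), 0 < r →
      Real.sqrt (∫ θ₁ in (-π)..π, ∫ θ₂ in (-π)..π,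
          ‖⟪ρ (k θ₁ * a r * k θ₂) f, g⟫_ℂ‖ ^ 2)
        ≤ 2 * π * (C * Real.exp (-lam * r) * ‖f‖ * ‖g‖) := by
  intro f g r hr
  rcases isEmpty_or_nonempty P with hP | hP
  · have hf : f = 0 := by
      apply e.repr.injective
      exact Subsingleton.elim _ _
    simp [hf]
  obtain ⟨μ0⟩ := hP
  set E : ℝ := C * Real.exp (-lam * r) with hEdef
  have hE : 0 ≤ E := le_trans (norm_nonneg _) (hbound r hr μ0 μ0)
  set w : ℝ → H := fun θ₁ => (ρ (a r)).symm ((ρ (k θ₁)).symm g) with hwdef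
  set u : P → H := fun μ => ρ (a r) (e μ) with hudef
  have hπ : (0 : ℝ) < π := Real.pi_pos
  -- rewrite the matrix coefficient
  have hrw : ∀ θ₁ θ₂ : ℝ, ⟪ρ (k θ₁ * a r * k θ₂) f, g⟫_ℂ = ⟪ρ (k θ₂) f, w θ₁⟫_ℂ := by
    intro θ₁ θ₂
    rw [map_mul, map_mul]
    have : (ρ (k θ₁) * ρ (a r) * ρ (k θ₂)) f = ρ (k θ₁) (ρ (a r) (ρ (k θ₂) f)) := rfl
    rw [this, LinearIsometryEquiv.inner_map_eq_flip, LinearIsometryEquiv.inner_map_eq_flip]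
  -- the coefficients of w θ₁
  have hwcoef : ∀ (θ₁ : ℝ) (μ : P), ‖e.repr (w θ₁) μ‖ = ‖⟪ρ (k θ₁) (u μ), g⟫_ℂ‖ := by
    intro θ₁ μ
    rw [HilbertBasis.repr_apply_apply, norm_inner_symm]
    have h1 : ⟪w θ₁, e μ⟫_ℂ = ⟪(ρ (k θ₁)).symm g, u μ⟫_ℂ := by
      rw [hwdef]
      simp only []
      rw [LinearIsometryEquiv.inner_map_eq_flip, LinearIsometryEquiv.symm_symm]
    rw [h1]
    have h2 : ⟪(ρ (k θ₁)).symm g, u μ⟫_ℂ = ⟪g, ρ (k θ₁) (u μ)⟫_ℂ := by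
      rw [LinearIsometryEquiv.inner_map_eq_flip, LinearIsometryEquiv.symm_symm]
    rw [h2, norm_inner_symm]
  -- inner integral
  have hinner : ∀ θ₁ : ℝ, (∫ θ₂ in (-π)..π, ‖⟪ρ (k θ₁ * a r * k θ₂) f, g⟫_ℂ‖ ^ 2)
      = (2 * π) * ∑' μ : P, ‖e.repr f μ‖ ^ 2 * ‖⟪ρ (k θ₁) (u μ), g⟫_ℂ‖ ^ 2 := by
    intro θ₁
    have h1 : (∫ θ₂ in (-π)..π, ‖⟪ρ (k θ₁ * a r * k θ₂) f, g⟫_ℂ‖ ^ 2)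
        = ∫ θ₂ in (-π)..π, ‖⟪ρ (k θ₂) f, w θ₁⟫_ℂ‖ ^ 2 := by
      apply intervalIntegral.integral_congr
      intro θ₂ _
      simp only []
      rw [hrw θ₁ θ₂]
    rw [h1, key_integral e ρ k hk f (w θ₁)]
    congr 1
    apply tsum_congr
    intro μ
    rw [hwcoef θ₁ μ]
  set φ : P → ℝ → ℝ := fun μ θ₁ => ‖e.repr f μ‖ ^ 2 * ‖⟪ρ (k θ₁) (u μ), g⟫_ℂ‖ ^ 2 with hφdef
  have hφcont : ∀ μ : P, Continuous (φ μ) := fun μ =>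
    continuous_const.mul (continuous_norm_inner e ρ k hk (u μ) g)
  have hφnonneg : ∀ (μ : P) (θ : ℝ), 0 ≤ φ μ θ := fun μ θ => by positivity
  have hφint : ∀ μ : P, (∫ θ₁ in (-π)..π, φ μ θ₁)
      = ‖e.repr f μ‖ ^ 2 * ((2 * π) * ∑' ν : P, ‖e.repr (u μ) ν‖ ^ 2 * ‖e.repr g ν‖ ^ 2) := by
    intro μ
    rw [hφdef]
    simp only []
    rw [intervalIntegral.integral_const_mul, key_integral e ρ k hk (u μ) g]
  set K : ℝ := 2 * π * (E ^ 2 * ‖g‖ ^ 2) with hKdef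
  have hK0 : 0 ≤ K := by
    rw [hKdef]
    positivity
  have hK : ∀ μ : P, (2 * π) * ∑' ν : P, ‖e.repr (u μ) ν‖ ^ 2 * ‖e.repr g ν‖ ^ 2 ≤ K := by
    intro μ
    have hco : ∀ ν : P, ‖e.repr (u μ) ν‖ ≤ E := by
      intro ν
      rw [HilbertBasis.repr_apply_apply, norm_inner_symm]
      exact hbound r hr μ ν
    have hsum2 : Summable fun ν : P => E ^ 2 * ‖e.repr g ν‖ ^ 2 :=
      (summable_sq (e.repr g)).mul_left _
    have hle : ∀ ν : P, ‖e.repr (u μ) ν‖ ^ 2 * ‖e.repr g ν‖ ^ 2 ≤ E ^ 2 * ‖e.repr g ν‖ ^ 2 := by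
      intro ν
      have h := hco ν
      have h4 : ‖e.repr (u μ) ν‖ ^ 2 ≤ E ^ 2 := by
        nlinarith [norm_nonneg (e.repr (u μ) ν)]
      exact mul_le_mul_of_nonneg_right h4 (sq_nonneg _)
    have hsum1 : Summable fun ν : P => ‖e.repr (u μ) ν‖ ^ 2 * ‖e.repr g ν‖ ^ 2 :=
      Summable.of_nonneg_of_le (fun ν => by positivity) hle hsum2
    have h3 := Summable.tsum_le_tsum hle hsum1 hsum2
    rw [tsum_mul_left, tsum_sq_repr e g] at h3
    rw [hKdef]
    exact mul_le_mul_of_nonneg_left h3 (by positivity)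
  have hφI : ∀ μ : P, IntegrableOn (φ μ) (Set.Ioc (-π) π) := fun μ =>
    (hφcont μ).integrableOn_Ioc
  have hφint' : ∀ μ : P, (∫ θ₁ in Set.Ioc (-π) π, φ μ θ₁) = ∫ θ₁ in (-π)..π, φ μ θ₁ := fun μ =>
    (intervalIntegral.integral_of_le (by linarith)).symm
  have hφintle : ∀ μ : P, (∫ θ₁ in Set.Ioc (-π) π, φ μ θ₁) ≤ ‖e.repr f μ‖ ^ 2 * K := by
    intro μ
    rw [hφint' μ, hφint μ]
    exact mul_le_mul_of_nonneg_left (hK μ) (by positivity)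
  have hlint : ∀ μ : P, (∫⁻ θ₁ in Set.Ioc (-π) π, ‖φ μ θ₁‖₊)
      = ENNReal.ofReal (∫ θ₁ in Set.Ioc (-π) π, φ μ θ₁) := by
    intro μ
    rw [MeasureTheory.ofReal_integral_eq_lintegral_ofReal (hφI μ)
      (Filter.Eventually.of_forall (fun θ => hφnonneg μ θ))]
    apply lintegral_congr
    intro θ
    exact Real.enorm_eq_ofReal (hφnonneg μ θ)
  have hsummK : Summable fun μ : P => ‖e.repr f μ‖ ^ 2 * K :=
    (summable_sq (e.repr f)).mul_right K
  have hfin : (∑' μ : P, ∫⁻ θ₁ in Set.Ioc (-π) π, ‖φ μ θ₁‖₊) ≠ ⊤ := by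
    have h1 : (∑' μ : P, ∫⁻ θ₁ in Set.Ioc (-π) π, ‖φ μ θ₁‖₊)
        ≤ ∑' μ : P, ENNReal.ofReal (‖e.repr f μ‖ ^ 2 * K) := by
      apply ENNReal.tsum_le_tsum
      intro μ
      rw [hlint μ]
      exact ENNReal.ofReal_le_ofReal (hφintle μ)
    have h2 : (∑' μ : P, ENNReal.ofReal (‖e.repr f μ‖ ^ 2 * K)) ≠ ⊤ := by
      rw [← ENNReal.ofReal_tsum_of_nonneg (fun μ => by positivity) hsummK]
      exact ENNReal.ofReal_ne_top
    exact ne_top_of_le_ne_top h2 h1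
  have hswap : (∫ θ₁ in Set.Ioc (-π) π, ∑' μ : P, φ μ θ₁)
      = ∑' μ : P, ∫ θ₁ in Set.Ioc (-π) π, φ μ θ₁ :=
    integral_tsum (fun μ => ((hφcont μ).aestronglyMeasurable).restrict) hfin
  have htsumle : (∑' μ : P, ∫ θ₁ in Set.Ioc (-π) π, φ μ θ₁) ≤ ‖f‖ ^ 2 * K := by
    have hsummLHS : Summable fun μ : P => ∫ θ₁ in Set.Ioc (-π) π, φ μ θ₁ :=
      Summable.of_nonneg_of_le (fun μ => integral_nonneg (fun θ => hφnonneg μ θ))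
        hφintle hsummK
    have h3 := Summable.tsum_le_tsum hφintle hsummLHS hsummK
    rw [tsum_mul_right, tsum_sq_repr e f] at h3
    exact h3
  have hI : (∫ θ₁ in (-π)..π, ∫ θ₂ in (-π)..π, ‖⟪ρ (k θ₁ * a r * k θ₂) f, g⟫_ℂ‖ ^ 2)
      = (2 * π) * ∫ θ₁ in Set.Ioc (-π) π, ∑' μ : P, φ μ θ₁ := by
    have h1 : (∫ θ₁ in (-π)..π, ∫ θ₂ in (-π)..π, ‖⟪ρ (k θ₁ * a r * k θ₂) f, g⟫_ℂ‖ ^ 2)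
        = ∫ θ₁ in (-π)..π, (2 * π) * ∑' μ : P, φ μ θ₁ := by
      apply intervalIntegral.integral_congr
      intro θ₁ _
      simp only []
      rw [hinner θ₁]
    rw [h1, intervalIntegral.integral_const_mul, intervalIntegral.integral_of_le (by linarith)]
  have hIle : (∫ θ₁ in (-π)..π, ∫ θ₂ in (-π)..π, ‖⟪ρ (k θ₁ * a r * k θ₂) f, g⟫_ℂ‖ ^ 2)
      ≤ 2 * π * (‖f‖ ^ 2 * K) := by
    rw [hI, hswap]
    exact mul_le_mul_of_nonneg_left htsumle (by positivity)
  have hR : 2 * π * (‖f‖ ^ 2 * K) = (2 * π * (E * ‖f‖ * ‖g‖)) ^ 2 := by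
    rw [hKdef]
    ring
  have hR0 : 0 ≤ 2 * π * (E * ‖f‖ * ‖g‖) :=
    mul_nonneg (by positivity) (mul_nonneg (mul_nonneg hE (norm_nonneg f)) (norm_nonneg g))
  calc Real.sqrt (∫ θ₁ in (-π)..π, ∫ θ₂ in (-π)..π, ‖⟪ρ (k θ₁ * a r * k θ₂) f, g⟫_ℂ‖ ^ 2)
      ≤ Real.sqrt ((2 * π * (E * ‖f‖ * ‖g‖)) ^ 2) := Real.sqrt_le_sqrt (by rw [← hR]; exact hIle)
    _ = 2 * π * (E * ‖f‖ * ‖g‖) := Real.sqrt_sq hR0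
    _ = 2 * π * (C * Real.exp (-lam * r) * ‖f‖ * ‖g‖) := by rw [hEdef]
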